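/- Conservation of mass and energy (Lemma 3.4): Let (ρ_e, m_e)_{e∈E} be a smooth solution on [0,T]. Then for every t ∈ [0,T]: M(t) = M(0), and E(t) + ∫_0^t D(s) ds = E(0). -/

import Mathlib

/-- A *smooth solution* of the compressible flow problem on the pipe network
determined by `src`, `dst`, `ℓ` on the time interval `[0, T]`, with adiabatic
exponent `γ`, viscosity coefficients `a`, friction coefficients `b` and pressure
coefficients `c`.  The fluid state on edge `e` is given by the density `ρ e t x`
and the mass flux `m e t x`; the functions `ρt, ρx, mt, mx, mxx` are the
corresponding partial derivatives.  The pressure law is `p_e(ρ) = c e * ρ ^ γ`,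
with potential energy density `P_e(ρ) = c e * ρ ^ γ / (γ - 1)` and
`P_e'(ρ) = c e * γ / (γ - 1) * ρ ^ (γ - 1)`.  A vertex `w` is interior if at least
two edges are incident, and a function `f_e` is evaluated at the vertex `src e`
as `f e t 0` and at `dst e` as `f e t (ℓ e)`. -/
def SmoothSolution {V E : Type} [Fintype V] [Fintype E] [DecidableEq V]
    (src dst : E → V) (ℓ : E → ℝ) (γ : ℝ) (a b c : E → ℝ) (T : ℝ)
    (ρ m ρt ρx mt mx mxx : E → ℝ → ℝ → ℝ) : Prop :=
  -- uniform positivity of the density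
  (∃ ρlow > (0 : ℝ), ∀ e, ∀ t ∈ Set.Icc 0 T, ∀ x ∈ Set.Icc 0 (ℓ e), ρlow ≤ ρ e t x) ∧
  -- ρ and m are continuously differentiable, and ∂ₓ m is continuously differentiable in x
  (∀ e, ∀ t ∈ Set.Icc 0 T, ∀ x ∈ Set.Icc 0 (ℓ e),
      HasDerivAt (fun s => ρ e s x) (ρt e t x) t ∧
      HasDerivAt (fun y => ρ e t y) (ρx e t x) x ∧
      HasDerivAt (fun s => m e s x) (mt e t x) t ∧
      HasDerivAt (fun y => m e t y) (mx e t x) x ∧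
      HasDerivAt (fun y => mx e t y) (mxx e t x) x) ∧
  (∀ e, ContinuousOn (fun q : ℝ × ℝ => ρ e q.1 q.2) (Set.Icc 0 T ×ˢ Set.Icc 0 (ℓ e))) ∧
  (∀ e, ContinuousOn (fun q : ℝ × ℝ => m e q.1 q.2) (Set.Icc 0 T ×ˢ Set.Icc 0 (ℓ e))) ∧
  (∀ e, ContinuousOn (fun q : ℝ × ℝ => ρt e q.1 q.2) (Set.Icc 0 T ×ˢ Set.Icc 0 (ℓ e))) ∧
  (∀ e, ContinuousOn (fun q : ℝ × ℝ => ρx e q.1 q.2) (Set.Icc 0 T ×ˢ Set.Icc 0 (ℓ e))) ∧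
  (∀ e, ContinuousOn (fun q : ℝ × ℝ => mt e q.1 q.2) (Set.Icc 0 T ×ˢ Set.Icc 0 (ℓ e))) ∧
  (∀ e, ContinuousOn (fun q : ℝ × ℝ => mx e q.1 q.2) (Set.Icc 0 T ×ˢ Set.Icc 0 (ℓ e))) ∧
  (∀ e, ∀ t ∈ Set.Icc 0 T, ContinuousOn (fun y => mxx e t y) (Set.Icc 0 (ℓ e))) ∧
  -- (i) conservation of mass:  ∂ₜ ρ + ∂ₓ m = 0
  (∀ e, ∀ t ∈ Set.Icc 0 T, ∀ x ∈ Set.Icc 0 (ℓ e), ρt e t x + mx e t x = 0) ∧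
  -- (ii) balance of momentum:
  --   ∂ₜ m + ∂ₓ (m²/ρ + p(ρ)) = a ρ ∂ₓ (ρ⁻² ∂ₓ m) - b |m| m / ρ
  (∀ e, ∀ t ∈ Set.Icc 0 T, ∀ x ∈ Set.Icc 0 (ℓ e), ∃ F G : ℝ,
      HasDerivAt (fun y => m e t y ^ 2 / ρ e t y + c e * ρ e t y ^ γ) F x ∧
      HasDerivAt (fun y => mx e t y / ρ e t y ^ 2) G x ∧
      mt e t x + F = a e * ρ e t x * G - b e * |m e t x| * m e t x / ρ e t x) ∧
  -- (iii) coupling conditions at interior vertices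
  (∀ w : V, 2 ≤ (Finset.univ.filter fun e : E => src e = w ∨ dst e = w).card →
    ∀ t ∈ Set.Icc 0 T,
      ((∑ e : E, ((if dst e = w then m e t (ℓ e) else 0)
          - (if src e = w then m e t 0 else 0))) = 0) ∧
      (∃ h : ℝ, ∀ e : E,
        (src e = w →
          m e t 0 ^ 2 / (2 * ρ e t 0 ^ 2) + c e * γ / (γ - 1) * ρ e t 0 ^ (γ - 1)
            - a e / ρ e t 0 ^ 2 * mx e t 0 = h) ∧
        (dst e = w →
          m e t (ℓ e) ^ 2 / (2 * ρ e t (ℓ e) ^ 2)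
            + c e * γ / (γ - 1) * ρ e t (ℓ e) ^ (γ - 1)
            - a e / ρ e t (ℓ e) ^ 2 * mx e t (ℓ e) = h))) ∧
  -- (iv) no-flux boundary condition at boundary vertices
  (∀ w : V, (Finset.univ.filter fun e : E => src e = w ∨ dst e = w).card < 2 →
    ∀ t ∈ Set.Icc 0 T, ∀ e : E,
      (src e = w → m e t 0 = 0) ∧ (dst e = w → m e t (ℓ e) = 0))
open MeasureTheory Set intervalIntegral

lemma fubini_rect {f : ℝ → ℝ → ℝ} {t L : ℝ} (ht : 0 ≤ t) (hL : 0 ≤ L)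
    (hf : ContinuousOn (fun q : ℝ × ℝ => f q.1 q.2) (Set.Icc 0 t ×ˢ Set.Icc 0 L)) :
    ((∫ x in (0:ℝ)..L, ∫ s in (0:ℝ)..t, f s x) = ∫ s in (0:ℝ)..t, ∫ x in (0:ℝ)..L, f s x)
    ∧ IntervalIntegrable (fun s => ∫ x in (0:ℝ)..L, f s x) MeasureTheory.volume 0 t := by
  have hint : Integrable (Function.uncurry f)
      ((volume.restrict (Set.Ioc 0 t)).prod (volume.restrict (Set.Ioc 0 L))) := by
    rw [Measure.prod_restrict]
    have h1 : IntegrableOn (Function.uncurry f) (Set.Icc 0 t ×ˢ Set.Icc 0 L) volume :=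
      hf.integrableOn_compact (isCompact_Icc.prod isCompact_Icc)
    exact h1.mono_set (Set.prod_mono Set.Ioc_subset_Icc_self Set.Ioc_subset_Icc_self)
  constructor
  · rw [integral_of_le hL, integral_of_le ht]
    rw [show (fun s => ∫ x in (0:ℝ)..L, f s x) = (fun s => ∫ x in Set.Ioc (0:ℝ) L, f s x) from
      funext fun s => integral_of_le hL]
    rw [show (fun x => ∫ s in (0:ℝ)..t, f s x) = (fun x => ∫ s in Set.Ioc (0:ℝ) t, f s x) from
      funext fun x => integral_of_le ht]
    exact (integral_integral_swap hint).symm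
  · rw [intervalIntegrable_iff, uIoc_of_le ht]
    have h2 := hint.integral_prod_left
    rw [show (fun s => ∫ x in (0:ℝ)..L, f s x) = (fun s => ∫ x in Set.Ioc (0:ℝ) L, f s x) from
      funext fun s => integral_of_le hL]
    exact h2

lemma sect_t {f : ℝ × ℝ → ℝ} {T L : ℝ}
    (hf : ContinuousOn f (Set.Icc 0 T ×ˢ Set.Icc 0 L))
    {x : ℝ} (hx : x ∈ Set.Icc 0 L) : ContinuousOn (fun s => f (s, x)) (Set.Icc 0 T) :=
  hf.comp ((continuous_id.prodMk continuous_const).continuousOn)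
    (fun s hs => Set.mem_prod.mpr ⟨hs, hx⟩)

lemma sect_x {f : ℝ × ℝ → ℝ} {T L : ℝ}
    (hf : ContinuousOn f (Set.Icc 0 T ×ˢ Set.Icc 0 L))
    {s : ℝ} (hs : s ∈ Set.Icc 0 T) : ContinuousOn (fun x => f (s, x)) (Set.Icc 0 L) :=
  hf.comp ((continuous_const.prodMk continuous_id).continuousOn)
    (fun x hx => Set.mem_prod.mpr ⟨hs, hx⟩)

lemma contInt {f : ℝ → ℝ} {L : ℝ} (hL : 0 ≤ L) (hf : ContinuousOn f (Set.Icc 0 L)) :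
    IntervalIntegrable f MeasureTheory.volume 0 L :=
  ContinuousOn.intervalIntegrable (by rwa [Set.uIcc_of_le hL])

lemma energy_identity (γ A B C r mm rx mxv mxxv mtv rtv u v w : ℝ)
    (hr : r ≠ 0) (hγ : γ - 1 ≠ 0) (hv : v = u * r) (hw : w ^ 3 = w * mm ^ 2)
    (hmom : mtv + ((2 * mm * mxv * r - mm ^ 2 * rx) / r ^ 2 + C * (rx * γ * v)) =
      A * r * ((mxxv * r ^ 2 - mxv * (2 * r * rx)) / (r ^ 2) ^ 2) - B * w * mm / r)
    (hrt : rtv = -mxv) :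
    mm * mtv / r - mm ^ 2 * rtv / (2 * r ^ 2) + C * γ / (γ - 1) * v * rtv
      = -(A * mxv ^ 2 / r ^ 2 + B * w ^ 3 / r ^ 2)
        - (mxv * (mm ^ 2 / (2 * r ^ 2) + C * γ / (γ - 1) * v - A / r ^ 2 * mxv)
          + mm * ((mxv * r - mm * rx) * mm / r ^ 3 + C * γ * rx * u
              - A * (mxxv * r ^ 2 - 2 * r * rx * mxv) / r ^ 4)) := by
  have hmt : mtv = A * r * ((mxxv * r ^ 2 - mxv * (2 * r * rx)) / (r ^ 2) ^ 2) - B * w * mm / r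
      - ((2 * mm * mxv * r - mm ^ 2 * rx) / r ^ 2 + C * (rx * γ * v)) := by linarith
  subst hmt hrt hv
  rw [hw]
  field_simp
  ring

lemma eta_hasDerivAt {ρ m : ℝ → ℝ} {rt mt s : ℝ} (c γ : ℝ) (hγ : 1 ≤ γ) (hγ1 : γ - 1 ≠ 0)
    (hρ : HasDerivAt ρ rt s) (hm : HasDerivAt m mt s) (hr : ρ s ≠ 0) :
    HasDerivAt (fun q => m q ^ 2 / (2 * ρ q) + c * ρ q ^ γ / (γ - 1))
      (m s * mt / ρ s - m s ^ 2 * rt / (2 * ρ s ^ 2) + c * γ / (γ - 1) * ρ s ^ (γ - 1) * rt)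
      s := by
  have h1 := (hm.pow 2).div (hρ.const_mul 2) (by simpa using hr)
  have h2 := ((hρ.rpow_const (p := γ) (Or.inr hγ)).const_mul c).div_const (γ - 1)
  refine (h1.add h2).congr_deriv ?_
  simp only [Pi.pow_apply, Pi.add_apply, Pi.sub_apply, Pi.div_apply, Pi.mul_apply]
  push_cast
  field_simp

lemma F0_hasDerivAt {ρ m : ℝ → ℝ} {rx mxv x : ℝ} (c γ : ℝ) (hγ : 1 ≤ γ)
    (hρ : HasDerivAt ρ rx x) (hm : HasDerivAt m mxv x) (hr : ρ x ≠ 0) :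
    HasDerivAt (fun y => m y ^ 2 / ρ y + c * ρ y ^ γ)
      ((2 * m x * mxv * ρ x - m x ^ 2 * rx) / ρ x ^ 2 + c * (rx * γ * ρ x ^ (γ - 1))) x := by
  have h1 := (hm.pow 2).div hρ hr
  have h2 := (hρ.rpow_const (p := γ) (Or.inr hγ)).const_mul c
  refine (h1.add h2).congr_deriv ?_
  simp only [Pi.pow_apply, Pi.add_apply, Pi.sub_apply, Pi.div_apply, Pi.mul_apply]
  push_cast
  ring

lemma G0_hasDerivAt {ρ mx : ℝ → ℝ} {rx mxxv x : ℝ}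
    (hρ : HasDerivAt ρ rx x) (hmx : HasDerivAt mx mxxv x) (hr : ρ x ≠ 0) :
    HasDerivAt (fun y => mx y / ρ y ^ 2)
      ((mxxv * ρ x ^ 2 - mx x * (2 * ρ x * rx)) / (ρ x ^ 2) ^ 2) x := by
  have h1 := hmx.div (hρ.pow 2) (pow_ne_zero 2 hr)
  refine h1.congr_deriv ?_
  simp only [Pi.pow_apply, Pi.add_apply, Pi.sub_apply, Pi.div_apply, Pi.mul_apply]
  push_cast
  ring

lemma flux_hasDerivAt {ρ m mx : ℝ → ℝ} {rx mxv mxxv x : ℝ} (A C γ : ℝ) (hγ1 : γ - 1 ≠ 0)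
    (hρ : HasDerivAt ρ rx x) (hm : HasDerivAt m mxv x) (hmx : HasDerivAt mx mxxv x)
    (hr : ρ x ≠ 0) :
    HasDerivAt
      (fun y => m y * (m y ^ 2 / (2 * ρ y ^ 2) + C * γ / (γ - 1) * ρ y ^ (γ - 1)
        - A / ρ y ^ 2 * mx y))
      (mxv * (m x ^ 2 / (2 * ρ x ^ 2) + C * γ / (γ - 1) * ρ x ^ (γ - 1) - A / ρ x ^ 2 * mx x)
        + m x * ((mxv * ρ x - m x * rx) * m x / ρ x ^ 3 + C * γ * rx * ρ x ^ (γ - 2)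
            - A * (mxxv * ρ x ^ 2 - 2 * ρ x * rx * mx x) / ρ x ^ 4)) x := by
  have t1 := (hm.pow 2).div ((hρ.pow 2).const_mul 2)
    (by simpa using pow_ne_zero 2 hr)
  have t2 := (hρ.rpow_const (p := γ - 1) (Or.inl hr)).const_mul (C * γ / (γ - 1))
  have t3 := ((hasDerivAt_const x A).div (hρ.pow 2) (pow_ne_zero 2 hr)).mul hmx
  have hB := (t1.add t2).sub t3
  have h := hm.mul hB
  refine h.congr_deriv ?_
  simp only [Pi.pow_apply, Pi.add_apply, Pi.sub_apply, Pi.div_apply, Pi.mul_apply]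
  rw [show γ - 1 - 1 = γ - 2 by ring]
  have h1 : ρ x ^ (γ - 1) = ρ x ^ (γ - 2) * ρ x := by
    rw [show γ - 1 = (γ - 2) + 1 by ring, Real.rpow_add_one hr]
  rw [h1]
  push_cast
  field_simp
  ring

/-- **Conservation of mass and energy (Lemma 3.4).**  Let `(ρ, m)` be a smooth solution
on `[0,T]`.  Then for every `t ∈ [0,T]`: the total mass satisfies `M(t) = M(0)`, and the
total energy satisfies `E(t) + ∫_0^t D(s) ds = E(0)`, where
`M(t) = Σ_e ∫_0^{ℓ_e} ρ dx`, `E(t) = Σ_e ∫_0^{ℓ_e} ( m²/(2ρ) + P(ρ) ) dx` and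
`D(t) = Σ_e ∫_0^{ℓ_e} ( a_e |∂ₓ m|²/ρ² + b_e |m|³/ρ² ) dx`. -/
theorem conservation_of_mass_and_energy
    {V E : Type} [Fintype V] [Fintype E] [DecidableEq V]
    (src dst : E → V) (ℓ : E → ℝ) (hℓ : ∀ e, 0 < ℓ e)
    (γ : ℝ) (hγ : 1 < γ) (a b c : E → ℝ)
    (ha : ∀ e, 0 ≤ a e) (hb : ∀ e, 0 ≤ b e) (hc : ∀ e, 0 < c e)
    (T : ℝ) (hT : 0 ≤ T)
    (ρ m ρt ρx mt mx mxx : E → ℝ → ℝ → ℝ)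
    (hsol : SmoothSolution src dst ℓ γ a b c T ρ m ρt ρx mt mx mxx)
    (t : ℝ) (ht : t ∈ Set.Icc 0 T) :
    ((∑ e, ∫ x in (0 : ℝ)..(ℓ e), ρ e t x)
        = ∑ e, ∫ x in (0 : ℝ)..(ℓ e), ρ e 0 x) ∧
    ((∑ e, ∫ x in (0 : ℝ)..(ℓ e),
        (m e t x ^ 2 / (2 * ρ e t x) + c e * ρ e t x ^ γ / (γ - 1)))
      + (∫ s in (0 : ℝ)..t, ∑ e, ∫ x in (0 : ℝ)..(ℓ e),
          (a e * mx e s x ^ 2 / ρ e s x ^ 2 + b e * |m e s x| ^ 3 / ρ e s x ^ 2))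
      = ∑ e, ∫ x in (0 : ℝ)..(ℓ e),
          (m e 0 x ^ 2 / (2 * ρ e 0 x) + c e * ρ e 0 x ^ γ / (γ - 1))) := by

  obtain ⟨⟨ρlow, hρlow, hρge⟩, hD, hρc, hmc, hρtc, hρxc, hmtc, hmxc, hmxxc, hmass, hmom,
    hintv, hbdv⟩ := hsol
  have ht0 : (0:ℝ) ≤ t := ht.1
  have hIcc : Set.Icc (0:ℝ) t ⊆ Set.Icc 0 T := Set.Icc_subset_Icc le_rfl ht.2
  have h0T : (0:ℝ) ∈ Set.Icc (0:ℝ) T := ⟨le_rfl, hT⟩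
  have hγ1 : γ - 1 ≠ 0 := sub_ne_zero.mpr (ne_of_gt hγ)
  have hγle : (1:ℝ) ≤ γ := hγ.le
  have hρne : ∀ e, ∀ s ∈ Set.Icc (0:ℝ) T, ∀ x ∈ Set.Icc 0 (ℓ e), ρ e s x ≠ 0 :=
    fun e s hs x hx => ne_of_gt (lt_of_lt_of_le hρlow (hρge e s hs x hx))
  have hL0 : ∀ e, (0:ℝ) ≤ ℓ e := fun e => (hℓ e).le
  have h0L : ∀ e, (0:ℝ) ∈ Set.Icc 0 (ℓ e) := fun e => ⟨le_rfl, hL0 e⟩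
  have hLL : ∀ e, ℓ e ∈ Set.Icc 0 (ℓ e) := fun e => ⟨hL0 e, le_rfl⟩
  -- ### Mass: Kirchhoff sum over vertices
  have hkirch : ∀ s ∈ Set.Icc (0:ℝ) T, ∑ e, (m e s 0 - m e s (ℓ e)) = 0 := by
    intro s hs
    have key : ∑ e, (m e s (ℓ e) - m e s 0) = 0 := by
      have hrw : ∀ e : E, m e s (ℓ e) - m e s 0 =
          ∑ w : V, ((if dst e = w then m e s (ℓ e) else 0)
            - (if src e = w then m e s 0 else 0)) := by
        intro e
        rw [Finset.sum_sub_distrib, Finset.sum_ite_eq, Finset.sum_ite_eq]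
        simp
      rw [Finset.sum_congr rfl fun e _ => hrw e, Finset.sum_comm]
      refine Finset.sum_eq_zero fun w _ => ?_
      by_cases h2 : 2 ≤ (Finset.univ.filter fun e : E => src e = w ∨ dst e = w).card
      · exact (hintv w h2 s hs).1
      · refine Finset.sum_eq_zero fun e _ => ?_
        have hbd := hbdv w (lt_of_not_ge h2) s hs e
        have e1 : (if dst e = w then m e s (ℓ e) else 0) = 0 := by
          split_ifs with h; exacts [hbd.2 h, rfl]
        have e2 : (if src e = w then m e s 0 else 0) = 0 := by
          split_ifs with h; exacts [hbd.1 h, rfl]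
        rw [e1, e2, sub_zero]
    have hneg : ∑ e, (m e s 0 - m e s (ℓ e)) = -∑ e, (m e s (ℓ e) - m e s 0) := by
      rw [← Finset.sum_neg_distrib]
      exact Finset.sum_congr rfl fun e _ => by ring
    rw [hneg, key, neg_zero]
  -- ### Mass: per-edge identity
  have mass_e : ∀ e, (∫ x in (0:ℝ)..(ℓ e), ρ e t x) - (∫ x in (0:ℝ)..(ℓ e), ρ e 0 x)
      = ∫ s in (0:ℝ)..t, (m e s 0 - m e s (ℓ e)) := by
    intro e
    have hFTCt : ∀ x ∈ Set.Icc (0:ℝ) (ℓ e), ρ e t x - ρ e 0 x = ∫ s in (0:ℝ)..t, ρt e s x := by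
      intro x hx
      refine (intervalIntegral.integral_eq_sub_of_hasDerivAt (f := fun s => ρ e s x)
        (fun s hs => ?_) ?_).symm
      · rw [Set.uIcc_of_le ht0] at hs
        exact (hD e s (hIcc hs) x hx).1
      · exact contInt ht0 ((sect_t (hρtc e) hx).mono hIcc)
    have i1 : IntervalIntegrable (fun x => ρ e t x) volume 0 (ℓ e) :=
      contInt (hL0 e) (sect_x (hρc e) ht)
    have i2 : IntervalIntegrable (fun x => ρ e 0 x) volume 0 (ℓ e) :=
      contInt (hL0 e) (sect_x (hρc e) h0T)
    have hfub := fubini_rect ht0 (hL0 e)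
      ((hρtc e).mono (Set.prod_mono hIcc (subset_refl _)))
    calc (∫ x in (0:ℝ)..(ℓ e), ρ e t x) - ∫ x in (0:ℝ)..(ℓ e), ρ e 0 x
        = ∫ x in (0:ℝ)..(ℓ e), (ρ e t x - ρ e 0 x) :=
          (intervalIntegral.integral_sub i1 i2).symm
      _ = ∫ x in (0:ℝ)..(ℓ e), (∫ s in (0:ℝ)..t, ρt e s x) :=
          intervalIntegral.integral_congr
            (fun x hx => hFTCt x (by rwa [Set.uIcc_of_le (hL0 e)] at hx))
      _ = ∫ s in (0:ℝ)..t, (∫ x in (0:ℝ)..(ℓ e), ρt e s x) := hfub.1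
      _ = ∫ s in (0:ℝ)..t, (m e s 0 - m e s (ℓ e)) := by
          refine intervalIntegral.integral_congr fun s hs => ?_
          rw [Set.uIcc_of_le ht0] at hs
          have hsT := hIcc hs
          have h1 : (∫ x in (0:ℝ)..(ℓ e), ρt e s x)
              = ∫ x in (0:ℝ)..(ℓ e), -(mx e s x) :=
            intervalIntegral.integral_congr fun x hx => by
              have := hmass e s hsT x (by rwa [Set.uIcc_of_le (hL0 e)] at hx); linarith
          have h2 : (∫ x in (0:ℝ)..(ℓ e), mx e s x) = m e s (ℓ e) - m e s 0 := by
            refine intervalIntegral.integral_eq_sub_of_hasDerivAt (f := fun x => m e s x)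
              (fun x hx => ?_) ?_
            · rw [Set.uIcc_of_le (hL0 e)] at hx
              exact (hD e s hsT x hx).2.2.2.1
            · exact contInt (hL0 e) (sect_x (hmxc e) hsT)
          rw [h1, intervalIntegral.integral_neg, h2]; ring
  have hmassint : ∀ e : E, IntervalIntegrable (fun s => m e s 0 - m e s (ℓ e)) volume 0 t :=
    fun e => contInt ht0
      (((sect_t (hmc e) (h0L e)).sub (sect_t (hmc e) (hLL e))).mono hIcc)
  have massTotal : ∑ e, ((∫ x in (0:ℝ)..(ℓ e), ρ e t x) - ∫ x in (0:ℝ)..(ℓ e), ρ e 0 x) = 0 :=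
    calc ∑ e, ((∫ x in (0:ℝ)..(ℓ e), ρ e t x) - ∫ x in (0:ℝ)..(ℓ e), ρ e 0 x)
        = ∑ e, ∫ s in (0:ℝ)..t, (m e s 0 - m e s (ℓ e)) :=
          Finset.sum_congr rfl fun e _ => mass_e e
      _ = ∫ s in (0:ℝ)..t, ∑ e, (m e s 0 - m e s (ℓ e)) :=
          (intervalIntegral.integral_finset_sum (fun e _ => hmassint e)).symm
      _ = ∫ s in (0:ℝ)..t, (0:ℝ) :=
          intervalIntegral.integral_congr
            (fun s hs => hkirch s (hIcc (by rwa [Set.uIcc_of_le ht0] at hs)))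
      _ = 0 := intervalIntegral.integral_zero
  -- ### Energy: joint continuity of the time derivative of the energy density
  have hηtc : ∀ e : E, ContinuousOn (fun q : ℝ × ℝ =>
      m e q.1 q.2 * mt e q.1 q.2 / ρ e q.1 q.2
        - m e q.1 q.2 ^ 2 * ρt e q.1 q.2 / (2 * ρ e q.1 q.2 ^ 2)
        + c e * γ / (γ - 1) * ρ e q.1 q.2 ^ (γ - 1) * ρt e q.1 q.2)
      (Set.Icc 0 T ×ˢ Set.Icc 0 (ℓ e)) := by
    intro e
    have hne : ∀ q ∈ Set.Icc (0:ℝ) T ×ˢ Set.Icc (0:ℝ) (ℓ e), ρ e q.1 q.2 ≠ 0 :=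
      fun q hq => hρne e q.1 hq.1 q.2 hq.2
    exact ((((hmc e).mul (hmtc e)).div (hρc e) hne).sub
        ((((hmc e).pow 2).mul (hρtc e)).div (continuousOn_const.mul ((hρc e).pow 2))
          (fun q hq => mul_ne_zero two_ne_zero (pow_ne_zero 2 (hne q hq))))).add
      ((continuousOn_const.mul ((hρc e).rpow_const (fun q hq => Or.inl (hne q hq)))).mul
        (hρtc e))
  -- joint continuity of the dissipation density
  have hdc : ∀ e : E, ContinuousOn (fun q : ℝ × ℝ =>
      a e * mx e q.1 q.2 ^ 2 / ρ e q.1 q.2 ^ 2 + b e * |m e q.1 q.2| ^ 3 / ρ e q.1 q.2 ^ 2)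
      (Set.Icc 0 T ×ˢ Set.Icc 0 (ℓ e)) := by
    intro e
    have hne : ∀ q ∈ Set.Icc (0:ℝ) T ×ˢ Set.Icc (0:ℝ) (ℓ e), ρ e q.1 q.2 ≠ 0 :=
      fun q hq => hρne e q.1 hq.1 q.2 hq.2
    exact ((continuousOn_const.mul ((hmxc e).pow 2)).div ((hρc e).pow 2)
        (fun q hq => pow_ne_zero 2 (hne q hq))).add
      ((continuousOn_const.mul (((hmc e).abs).pow 3)).div ((hρc e).pow 2)
        (fun q hq => pow_ne_zero 2 (hne q hq)))
  -- ### Energy: per-edge spatial identity at each time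
  have E2 : ∀ e : E, ∀ s ∈ Set.Icc (0:ℝ) t,
      (∫ x in (0:ℝ)..(ℓ e),
        (m e s x * mt e s x / ρ e s x - m e s x ^ 2 * ρt e s x / (2 * ρ e s x ^ 2)
          + c e * γ / (γ - 1) * ρ e s x ^ (γ - 1) * ρt e s x))
      = -(∫ x in (0:ℝ)..(ℓ e),
            (a e * mx e s x ^ 2 / ρ e s x ^ 2 + b e * |m e s x| ^ 3 / ρ e s x ^ 2))
        - ((m e s (ℓ e) * (m e s (ℓ e) ^ 2 / (2 * ρ e s (ℓ e) ^ 2)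
              + c e * γ / (γ - 1) * ρ e s (ℓ e) ^ (γ - 1)
              - a e / ρ e s (ℓ e) ^ 2 * mx e s (ℓ e)))
          - (m e s 0 * (m e s 0 ^ 2 / (2 * ρ e s 0 ^ 2)
              + c e * γ / (γ - 1) * ρ e s 0 ^ (γ - 1)
              - a e / ρ e s 0 ^ 2 * mx e s 0))) := by
    intro e s hs
    have hsT := hIcc hs
    have hne : ∀ x ∈ Set.Icc (0:ℝ) (ℓ e), ρ e s x ≠ 0 := fun x hx => hρne e s hsT x hx
    have hpt : ∀ x ∈ Set.Icc (0:ℝ) (ℓ e),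
        m e s x * mt e s x / ρ e s x - m e s x ^ 2 * ρt e s x / (2 * ρ e s x ^ 2)
          + c e * γ / (γ - 1) * ρ e s x ^ (γ - 1) * ρt e s x
        = -(a e * mx e s x ^ 2 / ρ e s x ^ 2 + b e * |m e s x| ^ 3 / ρ e s x ^ 2)
          - (mx e s x * (m e s x ^ 2 / (2 * ρ e s x ^ 2)
                + c e * γ / (γ - 1) * ρ e s x ^ (γ - 1) - a e / ρ e s x ^ 2 * mx e s x)
            + m e s x * ((mx e s x * ρ e s x - m e s x * ρx e s x) * m e s x / ρ e s x ^ 3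
                + c e * γ * ρx e s x * ρ e s x ^ (γ - 2)
                - a e * (mxx e s x * ρ e s x ^ 2 - 2 * ρ e s x * ρx e s x * mx e s x)
                    / ρ e s x ^ 4)) := by
      intro x hx
      obtain ⟨F, G, hF, hG, hFG⟩ := hmom e s hsT x hx
      obtain ⟨hDt, hDx, hDmt, hDmx, hDmxx⟩ := hD e s hsT x hx
      have hr := hne x hx
      have hFeq : F = (2 * m e s x * mx e s x * ρ e s x - m e s x ^ 2 * ρx e s x) / ρ e s x ^ 2
          + c e * (ρx e s x * γ * ρ e s x ^ (γ - 1)) :=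
        hF.unique (F0_hasDerivAt (c e) γ hγle hDx hDmx hr)
      have hGeq : G = (mxx e s x * ρ e s x ^ 2 - mx e s x * (2 * ρ e s x * ρx e s x))
          / (ρ e s x ^ 2) ^ 2 :=
        hG.unique (G0_hasDerivAt hDx hDmxx hr)
      rw [hFeq, hGeq] at hFG
      have hv : ρ e s x ^ (γ - 1) = ρ e s x ^ (γ - 2) * ρ e s x := by
        rw [show γ - 1 = (γ - 2) + 1 by ring, Real.rpow_add_one hr]
      have hw : |m e s x| ^ 3 = |m e s x| * m e s x ^ 2 := by
        rcases abs_cases (m e s x) with ⟨h1, _⟩ | ⟨h1, _⟩ <;> rw [h1] <;> ring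
      have hrt : ρt e s x = -(mx e s x) := by
        have := hmass e s hsT x hx; linarith
      exact energy_identity γ (a e) (b e) (c e) _ _ _ _ _ _ _ _ _ _ hr hγ1 hv hw hFG hrt
    have c1 : ContinuousOn (fun x => ρ e s x) (Set.Icc 0 (ℓ e)) := sect_x (hρc e) hsT
    have c2 : ContinuousOn (fun x => m e s x) (Set.Icc 0 (ℓ e)) := sect_x (hmc e) hsT
    have c3 : ContinuousOn (fun x => ρx e s x) (Set.Icc 0 (ℓ e)) := sect_x (hρxc e) hsT
    have c4 : ContinuousOn (fun x => mx e s x) (Set.Icc 0 (ℓ e)) := sect_x (hmxc e) hsT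
    have c5 : ContinuousOn (fun x => mxx e s x) (Set.Icc 0 (ℓ e)) := hmxxc e s hsT
    have cB : ContinuousOn (fun x => m e s x ^ 2 / (2 * ρ e s x ^ 2)
        + c e * γ / (γ - 1) * ρ e s x ^ (γ - 1) - a e / ρ e s x ^ 2 * mx e s x)
        (Set.Icc 0 (ℓ e)) := by
      refine ContinuousOn.sub (ContinuousOn.add ?_ ?_) ?_
      · exact (c2.pow 2).div (continuousOn_const.mul (c1.pow 2))
          (fun x hx => mul_ne_zero two_ne_zero (pow_ne_zero 2 (hne x hx)))
      · exact continuousOn_const.mul (c1.rpow_const (fun x hx => Or.inl (hne x hx)))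
      · exact (continuousOn_const.div (c1.pow 2)
          (fun x hx => pow_ne_zero 2 (hne x hx))).mul c4
    have cΨ2 : ContinuousOn (fun x => (mx e s x * ρ e s x - m e s x * ρx e s x) * m e s x
        / ρ e s x ^ 3 + c e * γ * ρx e s x * ρ e s x ^ (γ - 2)
        - a e * (mxx e s x * ρ e s x ^ 2 - 2 * ρ e s x * ρx e s x * mx e s x) / ρ e s x ^ 4)
        (Set.Icc 0 (ℓ e)) := by
      refine ContinuousOn.sub (ContinuousOn.add ?_ ?_) ?_
      · exact (((c4.mul c1).sub (c2.mul c3)).mul c2).div (c1.pow 3)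
          (fun x hx => pow_ne_zero 3 (hne x hx))
      · exact ((continuousOn_const.mul c3)).mul
          (c1.rpow_const (fun x hx => Or.inl (hne x hx)))
      · exact (continuousOn_const.mul ((c5.mul (c1.pow 2)).sub
          (((continuousOn_const.mul c1).mul c3).mul c4))).div (c1.pow 4)
          (fun x hx => pow_ne_zero 4 (hne x hx))
    have hΨint : IntervalIntegrable (fun x =>
        mx e s x * (m e s x ^ 2 / (2 * ρ e s x ^ 2)
            + c e * γ / (γ - 1) * ρ e s x ^ (γ - 1) - a e / ρ e s x ^ 2 * mx e s x)
          + m e s x * ((mx e s x * ρ e s x - m e s x * ρx e s x) * m e s x / ρ e s x ^ 3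
              + c e * γ * ρx e s x * ρ e s x ^ (γ - 2)
              - a e * (mxx e s x * ρ e s x ^ 2 - 2 * ρ e s x * ρx e s x * mx e s x)
                  / ρ e s x ^ 4)) volume 0 (ℓ e) :=
      contInt (hL0 e) ((c4.mul cB).add (c2.mul cΨ2))
    have hnegd : IntervalIntegrable (fun x =>
        -(a e * mx e s x ^ 2 / ρ e s x ^ 2 + b e * |m e s x| ^ 3 / ρ e s x ^ 2))
        volume 0 (ℓ e) :=
      contInt (hL0 e) (ContinuousOn.neg (sect_x (hdc e) hsT))
    have hdint : IntervalIntegrable (fun x =>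
        a e * mx e s x ^ 2 / ρ e s x ^ 2 + b e * |m e s x| ^ 3 / ρ e s x ^ 2)
        volume 0 (ℓ e) := contInt (hL0 e) (sect_x (hdc e) hsT)
    have hFTCx : (∫ x in (0:ℝ)..(ℓ e),
        (mx e s x * (m e s x ^ 2 / (2 * ρ e s x ^ 2)
            + c e * γ / (γ - 1) * ρ e s x ^ (γ - 1) - a e / ρ e s x ^ 2 * mx e s x)
          + m e s x * ((mx e s x * ρ e s x - m e s x * ρx e s x) * m e s x / ρ e s x ^ 3
              + c e * γ * ρx e s x * ρ e s x ^ (γ - 2)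
              - a e * (mxx e s x * ρ e s x ^ 2 - 2 * ρ e s x * ρx e s x * mx e s x)
                  / ρ e s x ^ 4)))
        = (m e s (ℓ e) * (m e s (ℓ e) ^ 2 / (2 * ρ e s (ℓ e) ^ 2)
              + c e * γ / (γ - 1) * ρ e s (ℓ e) ^ (γ - 1)
              - a e / ρ e s (ℓ e) ^ 2 * mx e s (ℓ e)))
          - (m e s 0 * (m e s 0 ^ 2 / (2 * ρ e s 0 ^ 2)
              + c e * γ / (γ - 1) * ρ e s 0 ^ (γ - 1)
              - a e / ρ e s 0 ^ 2 * mx e s 0)) := by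
      refine intervalIntegral.integral_eq_sub_of_hasDerivAt
        (f := fun y => m e s y * (m e s y ^ 2 / (2 * ρ e s y ^ 2)
          + c e * γ / (γ - 1) * ρ e s y ^ (γ - 1) - a e / ρ e s y ^ 2 * mx e s y))
        (fun x hx => ?_) hΨint
      rw [Set.uIcc_of_le (hL0 e)] at hx
      obtain ⟨hDt, hDx, hDmt, hDmx, hDmxx⟩ := hD e s hsT x hx
      exact flux_hasDerivAt (a e) (c e) γ hγ1 hDx hDmx hDmxx (hne x hx)
    calc (∫ x in (0:ℝ)..(ℓ e),
        (m e s x * mt e s x / ρ e s x - m e s x ^ 2 * ρt e s x / (2 * ρ e s x ^ 2)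
          + c e * γ / (γ - 1) * ρ e s x ^ (γ - 1) * ρt e s x))
        = ∫ x in (0:ℝ)..(ℓ e),
            (-(a e * mx e s x ^ 2 / ρ e s x ^ 2 + b e * |m e s x| ^ 3 / ρ e s x ^ 2)
              - (mx e s x * (m e s x ^ 2 / (2 * ρ e s x ^ 2)
                    + c e * γ / (γ - 1) * ρ e s x ^ (γ - 1) - a e / ρ e s x ^ 2 * mx e s x)
                + m e s x * ((mx e s x * ρ e s x - m e s x * ρx e s x) * m e s x / ρ e s x ^ 3
                    + c e * γ * ρx e s x * ρ e s x ^ (γ - 2)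
                    - a e * (mxx e s x * ρ e s x ^ 2 - 2 * ρ e s x * ρx e s x * mx e s x)
                        / ρ e s x ^ 4))) :=
          intervalIntegral.integral_congr
            (fun x hx => hpt x (by rwa [Set.uIcc_of_le (hL0 e)] at hx))
      _ = (∫ x in (0:ℝ)..(ℓ e),
            -(a e * mx e s x ^ 2 / ρ e s x ^ 2 + b e * |m e s x| ^ 3 / ρ e s x ^ 2))
          - ∫ x in (0:ℝ)..(ℓ e),
            (mx e s x * (m e s x ^ 2 / (2 * ρ e s x ^ 2)
                + c e * γ / (γ - 1) * ρ e s x ^ (γ - 1) - a e / ρ e s x ^ 2 * mx e s x)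
              + m e s x * ((mx e s x * ρ e s x - m e s x * ρx e s x) * m e s x / ρ e s x ^ 3
                  + c e * γ * ρx e s x * ρ e s x ^ (γ - 2)
                  - a e * (mxx e s x * ρ e s x ^ 2 - 2 * ρ e s x * ρx e s x * mx e s x)
                      / ρ e s x ^ 4)) :=
          intervalIntegral.integral_sub hnegd hΨint
      _ = -(∫ x in (0:ℝ)..(ℓ e),
            (a e * mx e s x ^ 2 / ρ e s x ^ 2 + b e * |m e s x| ^ 3 / ρ e s x ^ 2))
          - ((m e s (ℓ e) * (m e s (ℓ e) ^ 2 / (2 * ρ e s (ℓ e) ^ 2)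
                + c e * γ / (γ - 1) * ρ e s (ℓ e) ^ (γ - 1)
                - a e / ρ e s (ℓ e) ^ 2 * mx e s (ℓ e)))
            - (m e s 0 * (m e s 0 ^ 2 / (2 * ρ e s 0 ^ 2)
                + c e * γ / (γ - 1) * ρ e s 0 ^ (γ - 1)
                - a e / ρ e s 0 ^ 2 * mx e s 0))) := by
          rw [intervalIntegral.integral_neg, hFTCx]
  -- ### Energy: per-edge identity in time
  have E1 : ∀ e : E,
      (∫ x in (0:ℝ)..(ℓ e), (m e t x ^ 2 / (2 * ρ e t x) + c e * ρ e t x ^ γ / (γ - 1)))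
      - (∫ x in (0:ℝ)..(ℓ e), (m e 0 x ^ 2 / (2 * ρ e 0 x) + c e * ρ e 0 x ^ γ / (γ - 1)))
      = ∫ s in (0:ℝ)..t,
          (-(∫ x in (0:ℝ)..(ℓ e),
              (a e * mx e s x ^ 2 / ρ e s x ^ 2 + b e * |m e s x| ^ 3 / ρ e s x ^ 2))
            - ((m e s (ℓ e) * (m e s (ℓ e) ^ 2 / (2 * ρ e s (ℓ e) ^ 2)
                  + c e * γ / (γ - 1) * ρ e s (ℓ e) ^ (γ - 1)
                  - a e / ρ e s (ℓ e) ^ 2 * mx e s (ℓ e)))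
              - (m e s 0 * (m e s 0 ^ 2 / (2 * ρ e s 0 ^ 2)
                  + c e * γ / (γ - 1) * ρ e s 0 ^ (γ - 1)
                  - a e / ρ e s 0 ^ 2 * mx e s 0)))) := by
    intro e
    have hηx : ∀ s' ∈ Set.Icc (0:ℝ) T, ContinuousOn
        (fun x => m e s' x ^ 2 / (2 * ρ e s' x) + c e * ρ e s' x ^ γ / (γ - 1))
        (Set.Icc 0 (ℓ e)) := by
      intro s' hs'
      have hne : ∀ x ∈ Set.Icc (0:ℝ) (ℓ e), ρ e s' x ≠ 0 := hρne e s' hs'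
      exact (((sect_x (hmc e) hs').pow 2).div
          (continuousOn_const.mul (sect_x (hρc e) hs'))
          (fun x hx => mul_ne_zero two_ne_zero (hne x hx))).add
        ((continuousOn_const.mul ((sect_x (hρc e) hs').rpow_const
          (fun x hx => Or.inl (hne x hx)))).div_const _)
    have hFTCt : ∀ x ∈ Set.Icc (0:ℝ) (ℓ e),
        (m e t x ^ 2 / (2 * ρ e t x) + c e * ρ e t x ^ γ / (γ - 1))
          - (m e 0 x ^ 2 / (2 * ρ e 0 x) + c e * ρ e 0 x ^ γ / (γ - 1))
        = ∫ s in (0:ℝ)..t,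
            (m e s x * mt e s x / ρ e s x - m e s x ^ 2 * ρt e s x / (2 * ρ e s x ^ 2)
              + c e * γ / (γ - 1) * ρ e s x ^ (γ - 1) * ρt e s x) := by
      intro x hx
      refine (intervalIntegral.integral_eq_sub_of_hasDerivAt
        (f := fun s => m e s x ^ 2 / (2 * ρ e s x) + c e * ρ e s x ^ γ / (γ - 1))
        (fun s hs => ?_) ?_).symm
      · rw [Set.uIcc_of_le ht0] at hs
        have hsT := hIcc hs
        obtain ⟨hDt, _, hDmt, _, _⟩ := hD e s hsT x hx
        exact eta_hasDerivAt (c e) γ hγle hγ1 hDt hDmt (hρne e s hsT x hx)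
      · exact contInt ht0 ((sect_t (hηtc e) hx).mono hIcc)
    have i1 : IntervalIntegrable
        (fun x => m e t x ^ 2 / (2 * ρ e t x) + c e * ρ e t x ^ γ / (γ - 1))
        volume 0 (ℓ e) := contInt (hL0 e) (hηx t ht)
    have i2 : IntervalIntegrable
        (fun x => m e 0 x ^ 2 / (2 * ρ e 0 x) + c e * ρ e 0 x ^ γ / (γ - 1))
        volume 0 (ℓ e) := contInt (hL0 e) (hηx 0 h0T)
    calc (∫ x in (0:ℝ)..(ℓ e), (m e t x ^ 2 / (2 * ρ e t x) + c e * ρ e t x ^ γ / (γ - 1)))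
        - ∫ x in (0:ℝ)..(ℓ e), (m e 0 x ^ 2 / (2 * ρ e 0 x) + c e * ρ e 0 x ^ γ / (γ - 1))
        = ∫ x in (0:ℝ)..(ℓ e),
            ((m e t x ^ 2 / (2 * ρ e t x) + c e * ρ e t x ^ γ / (γ - 1))
              - (m e 0 x ^ 2 / (2 * ρ e 0 x) + c e * ρ e 0 x ^ γ / (γ - 1))) :=
          (intervalIntegral.integral_sub i1 i2).symm
      _ = ∫ x in (0:ℝ)..(ℓ e), (∫ s in (0:ℝ)..t,
            (m e s x * mt e s x / ρ e s x - m e s x ^ 2 * ρt e s x / (2 * ρ e s x ^ 2)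
              + c e * γ / (γ - 1) * ρ e s x ^ (γ - 1) * ρt e s x)) :=
          intervalIntegral.integral_congr
            (fun x hx => hFTCt x (by rwa [Set.uIcc_of_le (hL0 e)] at hx))
      _ = ∫ s in (0:ℝ)..t, (∫ x in (0:ℝ)..(ℓ e),
            (m e s x * mt e s x / ρ e s x - m e s x ^ 2 * ρt e s x / (2 * ρ e s x ^ 2)
              + c e * γ / (γ - 1) * ρ e s x ^ (γ - 1) * ρt e s x)) :=
          (fubini_rect ht0 (hL0 e) ((hηtc e).mono (Set.prod_mono hIcc (subset_refl _)))).1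
      _ = _ := intervalIntegral.integral_congr fun s hs =>
          E2 e s (by rwa [Set.uIcc_of_le ht0] at hs)
  -- ### Energy: Kirchhoff sum for the fluxes
  have hkirchE : ∀ s ∈ Set.Icc (0:ℝ) T,
      ∑ e, ((m e s (ℓ e) * (m e s (ℓ e) ^ 2 / (2 * ρ e s (ℓ e) ^ 2)
            + c e * γ / (γ - 1) * ρ e s (ℓ e) ^ (γ - 1)
            - a e / ρ e s (ℓ e) ^ 2 * mx e s (ℓ e)))
        - (m e s 0 * (m e s 0 ^ 2 / (2 * ρ e s 0 ^ 2)
            + c e * γ / (γ - 1) * ρ e s 0 ^ (γ - 1)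
            - a e / ρ e s 0 ^ 2 * mx e s 0))) = 0 := by
    intro s hs
    have hrw : ∀ e : E,
        (m e s (ℓ e) * (m e s (ℓ e) ^ 2 / (2 * ρ e s (ℓ e) ^ 2)
            + c e * γ / (γ - 1) * ρ e s (ℓ e) ^ (γ - 1)
            - a e / ρ e s (ℓ e) ^ 2 * mx e s (ℓ e)))
        - (m e s 0 * (m e s 0 ^ 2 / (2 * ρ e s 0 ^ 2)
            + c e * γ / (γ - 1) * ρ e s 0 ^ (γ - 1)
            - a e / ρ e s 0 ^ 2 * mx e s 0))
        = ∑ w : V, ((if dst e = w then m e s (ℓ e) * (m e s (ℓ e) ^ 2 / (2 * ρ e s (ℓ e) ^ 2)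
            + c e * γ / (γ - 1) * ρ e s (ℓ e) ^ (γ - 1)
            - a e / ρ e s (ℓ e) ^ 2 * mx e s (ℓ e)) else 0)
          - (if src e = w then m e s 0 * (m e s 0 ^ 2 / (2 * ρ e s 0 ^ 2)
            + c e * γ / (γ - 1) * ρ e s 0 ^ (γ - 1)
            - a e / ρ e s 0 ^ 2 * mx e s 0) else 0)) := by
      intro e
      rw [Finset.sum_sub_distrib, Finset.sum_ite_eq, Finset.sum_ite_eq]
      simp
    rw [Finset.sum_congr rfl fun e _ => hrw e, Finset.sum_comm]
    refine Finset.sum_eq_zero fun w _ => ?_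
    by_cases h2 : 2 ≤ (Finset.univ.filter fun e : E => src e = w ∨ dst e = w).card
    · obtain ⟨hk0, K, hK⟩ := hintv w h2 s hs
      have hterm : ∀ e : E,
          ((if dst e = w then m e s (ℓ e) * (m e s (ℓ e) ^ 2 / (2 * ρ e s (ℓ e) ^ 2)
              + c e * γ / (γ - 1) * ρ e s (ℓ e) ^ (γ - 1)
              - a e / ρ e s (ℓ e) ^ 2 * mx e s (ℓ e)) else 0)
            - (if src e = w then m e s 0 * (m e s 0 ^ 2 / (2 * ρ e s 0 ^ 2)
              + c e * γ / (γ - 1) * ρ e s 0 ^ (γ - 1)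
              - a e / ρ e s 0 ^ 2 * mx e s 0) else 0))
          = K * ((if dst e = w then m e s (ℓ e) else 0)
              - (if src e = w then m e s 0 else 0)) := by
        intro e
        have hd1 : (if dst e = w then m e s (ℓ e) * (m e s (ℓ e) ^ 2 / (2 * ρ e s (ℓ e) ^ 2)
            + c e * γ / (γ - 1) * ρ e s (ℓ e) ^ (γ - 1)
            - a e / ρ e s (ℓ e) ^ 2 * mx e s (ℓ e)) else 0)
            = K * (if dst e = w then m e s (ℓ e) else 0) := by
          split_ifs with h
          · rw [show m e s (ℓ e) ^ 2 / (2 * ρ e s (ℓ e) ^ 2)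
              + c e * γ / (γ - 1) * ρ e s (ℓ e) ^ (γ - 1)
              - a e / ρ e s (ℓ e) ^ 2 * mx e s (ℓ e) = K from (hK e).2 h]; ring
          · ring
        have hd2 : (if src e = w then m e s 0 * (m e s 0 ^ 2 / (2 * ρ e s 0 ^ 2)
            + c e * γ / (γ - 1) * ρ e s 0 ^ (γ - 1)
            - a e / ρ e s 0 ^ 2 * mx e s 0) else 0)
            = K * (if src e = w then m e s 0 else 0) := by
          split_ifs with h
          · rw [show m e s 0 ^ 2 / (2 * ρ e s 0 ^ 2)
              + c e * γ / (γ - 1) * ρ e s 0 ^ (γ - 1)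
              - a e / ρ e s 0 ^ 2 * mx e s 0 = K from (hK e).1 h]; ring
          · ring
        rw [hd1, hd2]; ring
      rw [Finset.sum_congr rfl fun e _ => hterm e, ← Finset.mul_sum, hk0, mul_zero]
    · refine Finset.sum_eq_zero fun e _ => ?_
      have hbd := hbdv w (lt_of_not_ge h2) s hs e
      have e1 : (if dst e = w then m e s (ℓ e) * (m e s (ℓ e) ^ 2 / (2 * ρ e s (ℓ e) ^ 2)
          + c e * γ / (γ - 1) * ρ e s (ℓ e) ^ (γ - 1)
          - a e / ρ e s (ℓ e) ^ 2 * mx e s (ℓ e)) else 0) = 0 := by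
        split_ifs with h
        · rw [hbd.2 h]; ring
        · rfl
      have e2 : (if src e = w then m e s 0 * (m e s 0 ^ 2 / (2 * ρ e s 0 ^ 2)
          + c e * γ / (γ - 1) * ρ e s 0 ^ (γ - 1)
          - a e / ρ e s 0 ^ 2 * mx e s 0) else 0) = 0 := by
        split_ifs with h
        · rw [hbd.1 h]; ring
        · rfl
      rw [e1, e2, sub_zero]
  -- ### Energy: integrability of the two time-dependent terms
  have hBint : ∀ e : E, IntervalIntegrable (fun s => ∫ x in (0:ℝ)..(ℓ e),
      (a e * mx e s x ^ 2 / ρ e s x ^ 2 + b e * |m e s x| ^ 3 / ρ e s x ^ 2)) volume 0 t :=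
    fun e => (fubini_rect ht0 (hL0 e) ((hdc e).mono (Set.prod_mono hIcc (subset_refl _)))).2
  have hnegBint : ∀ e : E, IntervalIntegrable (fun s => -(∫ x in (0:ℝ)..(ℓ e),
      (a e * mx e s x ^ 2 / ρ e s x ^ 2 + b e * |m e s x| ^ 3 / ρ e s x ^ 2))) volume 0 t :=
    fun e => (hBint e).neg
  have hCint : ∀ e : E, IntervalIntegrable (fun s =>
      (m e s (ℓ e) * (m e s (ℓ e) ^ 2 / (2 * ρ e s (ℓ e) ^ 2)
          + c e * γ / (γ - 1) * ρ e s (ℓ e) ^ (γ - 1)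
          - a e / ρ e s (ℓ e) ^ 2 * mx e s (ℓ e)))
        - (m e s 0 * (m e s 0 ^ 2 / (2 * ρ e s 0 ^ 2)
          + c e * γ / (γ - 1) * ρ e s 0 ^ (γ - 1)
          - a e / ρ e s 0 ^ 2 * mx e s 0))) volume 0 t := by
    intro e
    have mk : ∀ x0, x0 ∈ Set.Icc (0:ℝ) (ℓ e) → ContinuousOn
        (fun s => m e s x0 * (m e s x0 ^ 2 / (2 * ρ e s x0 ^ 2)
          + c e * γ / (γ - 1) * ρ e s x0 ^ (γ - 1) - a e / ρ e s x0 ^ 2 * mx e s x0))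
        (Set.Icc 0 T) := by
      intro x0 hx0
      have hne : ∀ s ∈ Set.Icc (0:ℝ) T, ρ e s x0 ≠ 0 := fun s hs => hρne e s hs x0 hx0
      refine (sect_t (hmc e) hx0).mul
        (ContinuousOn.sub (ContinuousOn.add ?_ ?_) ?_)
      · exact ((sect_t (hmc e) hx0).pow 2).div
          (continuousOn_const.mul ((sect_t (hρc e) hx0).pow 2))
          (fun s hs => mul_ne_zero two_ne_zero (pow_ne_zero 2 (hne s hs)))
      · exact continuousOn_const.mul ((sect_t (hρc e) hx0).rpow_const
          (fun s hs => Or.inl (hne s hs)))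
      · exact (continuousOn_const.div ((sect_t (hρc e) hx0).pow 2)
          (fun s hs => pow_ne_zero 2 (hne s hs))).mul (sect_t (hmxc e) hx0)
    exact contInt ht0 (((mk (ℓ e) (hLL e)).sub (mk 0 (h0L e))).mono hIcc)
  -- ### Energy: total balance
  have energyTotal :
      ∑ e, ((∫ x in (0:ℝ)..(ℓ e), (m e t x ^ 2 / (2 * ρ e t x) + c e * ρ e t x ^ γ / (γ - 1)))
        - ∫ x in (0:ℝ)..(ℓ e), (m e 0 x ^ 2 / (2 * ρ e 0 x) + c e * ρ e 0 x ^ γ / (γ - 1)))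
      = -(∫ s in (0:ℝ)..t, ∑ e, ∫ x in (0:ℝ)..(ℓ e),
          (a e * mx e s x ^ 2 / ρ e s x ^ 2 + b e * |m e s x| ^ 3 / ρ e s x ^ 2)) := by
    have hsplit : ∀ e : E, (∫ s in (0:ℝ)..t,
        (-(∫ x in (0:ℝ)..(ℓ e),
            (a e * mx e s x ^ 2 / ρ e s x ^ 2 + b e * |m e s x| ^ 3 / ρ e s x ^ 2))
          - ((m e s (ℓ e) * (m e s (ℓ e) ^ 2 / (2 * ρ e s (ℓ e) ^ 2)
                + c e * γ / (γ - 1) * ρ e s (ℓ e) ^ (γ - 1)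
                - a e / ρ e s (ℓ e) ^ 2 * mx e s (ℓ e)))
            - (m e s 0 * (m e s 0 ^ 2 / (2 * ρ e s 0 ^ 2)
                + c e * γ / (γ - 1) * ρ e s 0 ^ (γ - 1)
                - a e / ρ e s 0 ^ 2 * mx e s 0)))))
        = -(∫ s in (0:ℝ)..t, ∫ x in (0:ℝ)..(ℓ e),
            (a e * mx e s x ^ 2 / ρ e s x ^ 2 + b e * |m e s x| ^ 3 / ρ e s x ^ 2))
          - ∫ s in (0:ℝ)..t,
            ((m e s (ℓ e) * (m e s (ℓ e) ^ 2 / (2 * ρ e s (ℓ e) ^ 2)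
                + c e * γ / (γ - 1) * ρ e s (ℓ e) ^ (γ - 1)
                - a e / ρ e s (ℓ e) ^ 2 * mx e s (ℓ e)))
            - (m e s 0 * (m e s 0 ^ 2 / (2 * ρ e s 0 ^ 2)
                + c e * γ / (γ - 1) * ρ e s 0 ^ (γ - 1)
                - a e / ρ e s 0 ^ 2 * mx e s 0))) := by
      intro e
      rw [intervalIntegral.integral_sub (hnegBint e) (hCint e),
        intervalIntegral.integral_neg]
    rw [Finset.sum_congr rfl fun e _ => (E1 e).trans (hsplit e), Finset.sum_sub_distrib]
    have h1 : ∑ e : E, -(∫ s in (0:ℝ)..t, ∫ x in (0:ℝ)..(ℓ e),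
        (a e * mx e s x ^ 2 / ρ e s x ^ 2 + b e * |m e s x| ^ 3 / ρ e s x ^ 2))
        = -(∫ s in (0:ℝ)..t, ∑ e, ∫ x in (0:ℝ)..(ℓ e),
            (a e * mx e s x ^ 2 / ρ e s x ^ 2 + b e * |m e s x| ^ 3 / ρ e s x ^ 2)) := by
      rw [Finset.sum_neg_distrib, intervalIntegral.integral_finset_sum (fun e _ => hBint e)]
    have h2 : ∑ e : E, (∫ s in (0:ℝ)..t,
        ((m e s (ℓ e) * (m e s (ℓ e) ^ 2 / (2 * ρ e s (ℓ e) ^ 2)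
            + c e * γ / (γ - 1) * ρ e s (ℓ e) ^ (γ - 1)
            - a e / ρ e s (ℓ e) ^ 2 * mx e s (ℓ e)))
          - (m e s 0 * (m e s 0 ^ 2 / (2 * ρ e s 0 ^ 2)
            + c e * γ / (γ - 1) * ρ e s 0 ^ (γ - 1)
            - a e / ρ e s 0 ^ 2 * mx e s 0)))) = 0 := by
      rw [← intervalIntegral.integral_finset_sum (fun e _ => hCint e)]
      calc _ = ∫ s in (0:ℝ)..t, (0:ℝ) :=
            intervalIntegral.integral_congr
              (fun s hs => hkirchE s (hIcc (by rwa [Set.uIcc_of_le ht0] at hs)))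
        _ = 0 := intervalIntegral.integral_zero
    rw [h1, h2, sub_zero]
  constructor
  · rw [Finset.sum_sub_distrib] at massTotal
    linarith
  · rw [Finset.sum_sub_distrib] at energyTotal
    linarith
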